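/- Let C, C', D be categories such that C and C' admit all small colimits, and let F : C × C' ⥤ D be a functor that preserves small colimits separately in each variable. Then F preserves sifted colimits: for every sifted category J and every functor p : J ⥤ C × C' admitting a colimit, F preserves the colimit of p. -/

import Mathlib

open CategoryTheory CategoryTheory.Limits

universe v u u' u''

section Aux

variable {C : Type u} [Category.{v} C] {C' : Type u'} [Category.{v} C']
  {D : Type u''} [Category.{v} D]

lemma map_pair_comp' (F : C × C' ⥤ D) {a b c : C} {a' b' c' : C'}
    (f : a ⟶ b) (g : b ⟶ c) (f' : a' ⟶ b') (g' : b' ⟶ c') :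
    F.map ((f, f') : (a, a') ⟶ (b, b')) ≫ F.map ((g, g') : (b, b') ⟶ (c, c')) =
      F.map ((f ≫ g, f' ≫ g') : (a, a') ⟶ (c, c')) := by
  rw [← F.map_comp]; rfl

end Aux

/-- A functor of two variables which preserves small colimits separately in each variable
preserves sifted colimits. -/
theorem preservesSiftedColimits_of_preservesColimits_in_each_variable
    {C : Type u} [Category.{v} C] {C' : Type u'} [Category.{v} C']
    {D : Type u''} [Category.{v} D]
    [HasColimits C] [HasColimits C']
    (F : C × C' ⥤ D)
    (h₁ : ∀ c' : C', PreservesColimits (Prod.sectL C c' ⋙ F))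
    (h₂ : ∀ c : C, PreservesColimits (Prod.sectR c C' ⋙ F)) :
    ∀ (J : Type v) [SmallCategory J] [IsSifted J] (p : J ⥤ C × C') [HasColimit p],
      PreservesColimit p F := by
  intro J _ _ p _
  let p₁ : J ⥤ C := p ⋙ CategoryTheory.Prod.fst C C'
  let p₂ : J ⥤ C' := p ⋙ CategoryTheory.Prod.snd C C'
  let x : C := colimit p₁
  let y : C' := colimit p₂
  -- the componentwise colimit cocone over `p`
  let c : Cocone p :=
    { pt := (x, y)
      ι :=
        { app := fun j => (colimit.ι p₁ j, colimit.ι p₂ j)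
          naturality := fun j j' f => by
            refine Prod.ext ?_ ?_
            · show p₁.map f ≫ colimit.ι p₁ j' = colimit.ι p₁ j ≫ 𝟙 x
              simp
              exact (Category.comp_id _).symm
            · show p₂.map f ≫ colimit.ι p₂ j' = colimit.ι p₂ j ≫ 𝟙 y
              simp
              exact (Category.comp_id _).symm } }
  have hc : IsColimit c :=
    { desc := fun s =>
        (colimit.desc p₁ ((CategoryTheory.Prod.fst C C').mapCocone s),
         colimit.desc p₂ ((CategoryTheory.Prod.snd C C').mapCocone s))
      fac := fun s j => by
        refine Prod.ext ?_ ?_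
        · exact colimit.ι_desc ((CategoryTheory.Prod.fst C C').mapCocone s) j
        · exact colimit.ι_desc ((CategoryTheory.Prod.snd C C').mapCocone s) j
      uniq := fun s m w => by
        refine Prod.ext ?_ ?_
        · refine colimit.hom_ext fun j => ?_
          have := congrArg Prod.fst (w j)
          simpa using this
        · refine colimit.hom_ext fun j => ?_
          have := congrArg Prod.snd (w j)
          simpa using this }
  apply preservesColimit_of_preserves_colimit_cocone hc
  -- the bifunctor diagram on `J × J`
  let G : J × J ⥤ D := p₁.prod p₂ ⋙ F
  -- the candidate colimit cocone over `G`
  let c' : Cocone G :=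
    { pt := F.obj (x, y)
      ι :=
        { app := fun jk => F.map ((colimit.ι p₁ jk.1, colimit.ι p₂ jk.2) :
            (p₁.obj jk.1, p₂.obj jk.2) ⟶ (x, y))
          naturality := fun jk jk' f => by
            dsimp [G]
            rw [Category.comp_id, map_pair_comp' F, colimit.w p₁ f.1, colimit.w p₂ f.2] } }
  -- row colimit (colimit in the first variable at `y`)
  haveI := h₁ y
  let R : IsColimit ((Prod.sectL C y ⋙ F).mapCocone (colimit.cocone p₁)) :=
    isColimitOfPreserves _ (colimit.isColimit p₁)
  -- column colimits (colimit in the second variable at `p₁.obj j`)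
  haveI : ∀ j : J, PreservesColimits (Prod.sectR (p₁.obj j) C' ⋙ F) := fun j => h₂ (p₁.obj j)
  let Q : ∀ j : J, IsColimit ((Prod.sectR (p₁.obj j) C' ⋙ F).mapCocone (colimit.cocone p₂)) :=
    fun j => isColimitOfPreserves _ (colimit.isColimit p₂)
  -- for a cocone `s` over `G`, the `j`-th column cocone
  let colCocone : ∀ (s : Cocone G) (j : J), Cocone (p₂ ⋙ (Prod.sectR (p₁.obj j) C' ⋙ F)) :=
    fun s j =>
      { pt := s.pt
        ι :=
          { app := fun k => s.ι.app (j, k)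
            naturality := fun k k' f => by
              have := s.w ((𝟙 j, f) : (j, k) ⟶ (j, k'))
              dsimp [G] at this ⊢
              refine Eq.trans ?_ (Category.comp_id _).symm
              simp at this; exact this } }
  let d : ∀ (s : Cocone G) (j : J), F.obj (p₁.obj j, y) ⟶ s.pt :=
    fun s j => (Q j).desc (colCocone s j)
  have hd : ∀ (s : Cocone G) (j : J) (k : J),
      F.map ((𝟙 (p₁.obj j), colimit.ι p₂ k) : (p₁.obj j, p₂.obj k) ⟶ (p₁.obj j, y)) ≫ d s j =
        s.ι.app (j, k) := by
    intro s j k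
    exact (Q j).fac (colCocone s j) k
  -- the row cocone with components `d s j`
  let rowCocone : ∀ s : Cocone G, Cocone (p₁ ⋙ (Prod.sectL C y ⋙ F)) := fun s =>
    { pt := s.pt
      ι :=
        { app := fun j => d s j
          naturality := fun j j' f => by
            dsimp
            refine Eq.trans ?_ (Category.comp_id _).symm
            refine (Q j).hom_ext fun k => ?_
            dsimp
            refine Eq.trans (Category.assoc _ _ _).symm ?_
            have e1 : F.map ((𝟙 (p₁.obj j), colimit.ι p₂ k) :
                  (p₁.obj j, p₂.obj k) ⟶ (p₁.obj j, y)) ≫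
                F.map ((p₁.map f, 𝟙 y) : (p₁.obj j, y) ⟶ (p₁.obj j', y)) =
                F.map ((p₁.map f, 𝟙 (p₂.obj k)) : (p₁.obj j, p₂.obj k) ⟶ (p₁.obj j', p₂.obj k)) ≫
                F.map ((𝟙 (p₁.obj j'), colimit.ι p₂ k) :
                  (p₁.obj j', p₂.obj k) ⟶ (p₁.obj j', y)) := by
              rw [map_pair_comp' F, map_pair_comp' F]
              simp
              exact congrArg F.map (Prod.ext rfl (Category.comp_id _))
            erw [e1, Category.assoc, hd s j' k, hd s j k]
            have := s.w ((f, 𝟙 k) : (j, k) ⟶ (j', k))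
            dsimp [G] at this
            simp at this; exact this } }
  -- `c'` is a colimit cocone over `G`
  have hc' : IsColimit c' :=
    { desc := fun s => R.desc (rowCocone s)
      fac := fun s jk => by
        obtain ⟨j, k⟩ := jk
        dsimp [c']
        have e1 : F.map ((colimit.ι p₁ j, colimit.ι p₂ k) :
              (p₁.obj j, p₂.obj k) ⟶ (x, y)) =
            F.map ((𝟙 (p₁.obj j), colimit.ι p₂ k) :
              (p₁.obj j, p₂.obj k) ⟶ (p₁.obj j, y)) ≫
            F.map ((colimit.ι p₁ j, 𝟙 y) : (p₁.obj j, y) ⟶ (x, y)) := by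
          rw [map_pair_comp' F]; simp; exact congrArg F.map (Prod.ext rfl (Category.comp_id _).symm)
        rw [e1]; refine (Category.assoc _ _ _).trans ?_
        have e2 : F.map ((colimit.ι p₁ j, 𝟙 y) : (p₁.obj j, y) ⟶ (x, y)) ≫
            R.desc (rowCocone s) = d s j := R.fac (rowCocone s) j
        rw [e2, hd s j k]
      uniq := fun s m w => by
        refine R.uniq (rowCocone s) m fun j => ?_
        refine (Q j).hom_ext fun k => ?_
        dsimp
        refine Eq.trans (Category.assoc _ _ _).symm ?_
        have e1 : F.map ((𝟙 (p₁.obj j), colimit.ι p₂ k) :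
              (p₁.obj j, p₂.obj k) ⟶ (p₁.obj j, y)) ≫
            F.map ((colimit.ι p₁ j, 𝟙 y) : (p₁.obj j, y) ⟶ (x, y)) =
            F.map ((colimit.ι p₁ j, colimit.ι p₂ k) : (p₁.obj j, p₂.obj k) ⟶ (x, y)) := by
          rw [map_pair_comp' F]; simp; exact congrArg F.map (Prod.ext rfl (Category.comp_id _))
        erw [e1, w (j, k), hd s j k] }
  -- the diagonal is final since `J` is sifted
  have hw : IsColimit (c'.whisker (Functor.diag J)) :=
    (Functor.Final.isColimitWhiskerEquiv (Functor.diag J) c').symm hc'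
  -- transport along the (definitional) equality of diagrams
  exact IsColimit.ofIsoColimit hw (Cocones.ext (Iso.refl _) (fun j => by
    dsimp [c', c]
    simp))
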